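/- Every twisted involution w ∈ I(θ) can be written as e·s̲₁·s̲₂⋯s̲ₖ for some s₁,…,sₖ ∈ S, where e is the identity element; i.e., the orbit of the identity under the twisted monoid action is exactly I(θ). -/

import Mathlib

/-- `θ` maps simple reflections to simple reflections. -/
def PreservesSimples {B W : Type*} [Group W] {M : CoxeterMatrix B}
    (cs : CoxeterSystem M W) (θ : W ≃* W) : Prop :=
  ∀ i : B, ∃ j : B, θ (cs.simple i) = cs.simple j

open Classical in
/-- The twisted action `w · s̲`. -/
noncomputable def twMul {B W : Type*} [Group W] {M : CoxeterMatrix B}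
    (cs : CoxeterSystem M W) (θ : W ≃* W) (w : W) (i : B) : W :=
  if θ (cs.simple i) * w * cs.simple i = w then w * cs.simple i
  else θ (cs.simple i) * w * cs.simple i

/-- Action of a word of symbols. -/
noncomputable def twWord {B W : Type*} [Group W] {M : CoxeterMatrix B}
    (cs : CoxeterSystem M W) (θ : W ≃* W) (w : W) (l : List B) : W :=
  l.foldl (twMul cs θ) w

namespace TwistedAux

open CoxeterSystem List

attribute [local instance] Classical.propDecidable

variable {B W : Type*} [Group W] {M : CoxeterMatrix B} (cs : CoxeterSystem M W)

local prefix:100 "ss" => cs.simple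
local prefix:100 "π" => cs.wordProd
local prefix:100 "ℓ" => cs.length

lemma ris_cons (i : B) (ω : List B) :
    cs.rightInvSeq (i :: ω) = ((π ω)⁻¹ * ss i * π ω) :: cs.rightInvSeq ω := rfl

lemma lis_cons (i : B) (ω : List B) :
    cs.leftInvSeq (i :: ω) = ss i :: List.map (⇑(MulAut.conj (ss i))) (cs.leftInvSeq ω) := rfl

lemma comm1 (i i' : B) (a : ℕ) :
    ss i' * (ss i * ss i') ^ a = (ss i' * ss i) ^ a * ss i' := by
  induction a with
  | zero => simp
  | succ a ih =>
    rw [pow_succ', ← mul_assoc, show ss i' * (ss i * ss i') = (ss i' * ss i) * ss i' by group,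
      mul_assoc, ih, pow_succ']
    group

lemma inv_q (i i' : B) (a : ℕ) : ((ss i * ss i') ^ a)⁻¹ = (ss i' * ss i) ^ a := by
  rw [← inv_pow, mul_inv_rev, cs.inv_simple, cs.inv_simple]

/-- Key conjugation formula for alternating words. -/
lemma conj_alt (i i' : B) (n : ℕ) :
    (π (alternatingWord i i' n))⁻¹ * ss (if Even n then i' else i) * π (alternatingWord i i' n)
      = (ss i' * ss i) ^ n * ss i' := by
  rcases Nat.even_or_odd n with he | ho
  · obtain ⟨a, rfl⟩ := he
    rw [if_pos (Even.add_self a), cs.prod_alternatingWord_eq_mul_pow,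
      if_pos (Even.add_self a), one_mul]
    have h2 : (a + a) / 2 = a := by omega
    rw [h2, inv_q, pow_add]
    rw [mul_assoc, mul_assoc, comm1]
  · obtain ⟨a, rfl⟩ := ho
    rw [if_neg (by simp [Nat.even_add_one, parity_simps]), cs.prod_alternatingWord_eq_mul_pow,
      if_neg (by simp [Nat.even_add_one, parity_simps])]
    have h2 : (2 * a + 1) / 2 = a := by omega
    rw [h2, mul_inv_rev, inv_q, cs.inv_simple]
    -- goal: (si' si)^a * si' * si * (si' * (si si')^a) = (si' si)^(2a+1) * si'
    rw [comm1]
    calc (ss i' * ss i) ^ a * ss i' * ss i * ((ss i' * ss i) ^ a * ss i')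
        = (ss i' * ss i) ^ a * (ss i' * ss i) * (ss i' * ss i) ^ a * ss i' := by group
      _ = (ss i' * ss i) ^ (2 * a + 1) * ss i' := by
          rw [← pow_succ, show 2 * a + 1 = (a + 1) + a by omega, pow_add]
          group

lemma ris_alt (i i' : B) (n : ℕ) :
    cs.rightInvSeq (alternatingWord i i' n)
      = ((List.range n).map (fun k => (ss i' * ss i) ^ k * ss i')).reverse := by
  induction n with
  | zero => simp [alternatingWord]
  | succ n ih =>
    rw [alternatingWord_succ', ris_cons, ih, range_succ, map_append, reverse_append,
      map_singleton, reverse_singleton, singleton_append]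
    congr 1
    exact conj_alt cs i i' n

lemma count_ris_braid_even (i i' : B) (t : W) :
    Even (List.count t (cs.rightInvSeq (alternatingWord i i' (2 * M.M i i')))) := by
  classical
  rw [ris_alt, count_reverse, show 2 * M.M i i' = M.M i i' + M.M i i' by ring, List.range_add,
    map_append, count_append]
  have : (List.map (fun x => M.M i i' + x) (List.range (M.M i i'))).map
      (fun k => (ss i' * ss i) ^ k * ss i')
      = (List.range (M.M i i')).map (fun k => (ss i' * ss i) ^ k * ss i') := by
    rw [map_map]
    apply map_congr_left
    intro k _
    simp only [Function.comp_apply, pow_add, cs.simple_mul_simple_pow' i i', one_mul]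
  rw [this]
  exact Even.add_self _

/-- The sign-flipping map. -/
noncomputable def sigmaFun (i : B) : W × ℤˣ → W × ℤˣ :=
  fun p => (ss i * p.1 * ss i, if p.1 = ss i then -p.2 else p.2)

lemma conj_conj (i : B) (x : W) : ss i * (ss i * x * ss i) * ss i = x := by
  have h1 : ss i * (ss i * (x * ss i)) = x * ss i := cs.simple_mul_simple_cancel_left i
  calc ss i * (ss i * x * ss i) * ss i = (ss i * (ss i * (x * ss i))) * ss i := by group
    _ = (x * ss i) * ss i := by rw [h1]
    _ = x := cs.simple_mul_simple_cancel_right i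

lemma conj_eq_iff (i : B) (x : W) : ss i * x * ss i = ss i ↔ x = ss i := by
  constructor
  · intro h
    have h' : ss i * (ss i * x * ss i) * ss i = ss i * ss i * ss i := by rw [h]
    rw [conj_conj cs] at h'
    rwa [cs.simple_mul_simple_self, one_mul] at h'
  · rintro rfl
    rw [cs.simple_mul_simple_self, one_mul]

lemma sigmaFun_invol (i : B) : Function.Involutive (sigmaFun cs i) := by
  rintro ⟨x, e⟩
  simp only [sigmaFun]
  refine Prod.ext (conj_conj cs i x) ?_
  simp only
  by_cases h : x = ss i
  · rw [if_pos h, if_pos ((conj_eq_iff cs i x).mpr h), neg_neg]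
  · rw [if_neg h, if_neg (fun hc => h ((conj_eq_iff cs i x).mp hc))]

/-- The permutation `σᵢ` of `W × ℤˣ`. -/
noncomputable def sigma (i : B) : Equiv.Perm (W × ℤˣ) :=
  Function.Involutive.toPerm _ (sigmaFun_invol cs i)

lemma sigma_apply (i : B) (p : W × ℤˣ) : sigma cs i p = sigmaFun cs i p := rfl

lemma sigma_prod (ω : List B) (p : W × ℤˣ) :
    (ω.map (sigma cs)).prod p
      = (π ω * p.1 * (π ω)⁻¹, (-1 : ℤˣ) ^ (List.count p.1 (cs.rightInvSeq ω)) * p.2) := by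
  classical
  induction ω with
  | nil => simp [wordProd_nil]
  | cons i ω ih =>
    rw [map_cons, prod_cons, Equiv.Perm.mul_apply, ih, sigma_apply]
    simp only [sigmaFun]
    rw [ris_cons, wordProd_cons]
    refine Prod.ext ?_ ?_
    · simp only
      rw [mul_inv_rev, cs.inv_simple]
      group
    · simp only [count_cons]
      by_cases hc : π ω * p.1 * (π ω)⁻¹ = ss i
      · rw [if_pos hc]
        have hm : (π ω)⁻¹ * ss i * π ω = p.1 := by
          rw [← hc]; group
        rw [if_pos (by simpa using hm)]
        simp [pow_add, pow_one]
      · rw [if_neg hc]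
        have hm : ¬((π ω)⁻¹ * ss i * π ω = p.1) := by
          intro h
          apply hc
          rw [← h]; group
        rw [if_neg (by simpa using hm)]
        simp

lemma prod_map_alt {G : Type*} [Monoid G] (f : B → G) (i i' : B) (m : ℕ) :
    ((alternatingWord i i' (2 * m)).map f).prod = (f i * f i') ^ m := by
  induction m with
  | zero => simp [alternatingWord]
  | succ m ih =>
    rw [show 2 * (m + 1) = (2 * m + 1) + 1 by ring, alternatingWord_succ',
      if_neg (by simp [Nat.even_add_one, parity_simps]), alternatingWord_succ',
      if_pos (by simp), map_cons, map_cons, prod_cons, prod_cons, ih, pow_succ']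
    rw [mul_assoc]

lemma sigma_liftable : M.IsLiftable (sigma cs) := by
  intro i i'
  have hword : ((alternatingWord i i' (2 * M.M i i')).map (sigma cs)).prod
      = (sigma cs i * sigma cs i') ^ (M.M i i') := prod_map_alt (sigma cs) i i' _
  rw [← hword]
  ext p
  · rw [sigma_prod]
    have hπ : π (alternatingWord i i' (2 * M.M i i')) = 1 := by
      rw [cs.prod_alternatingWord_eq_mul_pow, if_pos (by simp [parity_simps]),
        show 2 * M.M i i' / 2 = M.M i i' by omega, one_mul, cs.simple_mul_simple_pow]
    rw [hπ]
    simp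
  · rw [sigma_prod]
    have hπ : π (alternatingWord i i' (2 * M.M i i')) = 1 := by
      rw [cs.prod_alternatingWord_eq_mul_pow, if_pos (by simp [parity_simps]),
        show 2 * M.M i i' / 2 = M.M i i' by omega, one_mul, cs.simple_mul_simple_pow]
    rw [hπ]
    simp only [Equiv.Perm.coe_one, id_eq]
    rw [(count_ris_braid_even cs i i' p.1).neg_one_pow, one_mul]

/-- The monoid homomorphism `W →* Perm (W × ℤˣ)`. -/
noncomputable def phi : W →* Equiv.Perm (W × ℤˣ) :=
  cs.lift ⟨sigma cs, sigma_liftable cs⟩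

lemma phi_wordProd (ω : List B) : phi cs (π ω) = (ω.map (sigma cs)).prod := by
  show phi cs (List.prod (ω.map cs.simple)) = _
  rw [MonoidHom.map_list_prod, map_map]
  congr 1
  apply map_congr_left
  intro i _
  exact cs.lift_apply_simple (sigma_liftable cs) i

lemma count_parity (ω ω' : List B) (h : π ω = π ω') (t : W) :
    (-1 : ℤˣ) ^ (List.count t (cs.rightInvSeq ω))
      = (-1 : ℤˣ) ^ (List.count t (cs.rightInvSeq ω')) := by
  classical
  have h1 := sigma_prod cs ω (t, 1)
  have h2 := sigma_prod cs ω' (t, 1)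
  rw [← phi_wordProd] at h1 h2
  rw [h, h2] at h1
  have := congrArg Prod.snd h1
  simpa using this.symm

lemma count_parity_lis (ω ω' : List B) (h : π ω = π ω') (t : W) :
    (-1 : ℤˣ) ^ (List.count t (cs.leftInvSeq ω))
      = (-1 : ℤˣ) ^ (List.count t (cs.leftInvSeq ω')) := by
  classical
  have := count_parity cs ω.reverse ω'.reverse (by rw [wordProd_reverse, wordProd_reverse, h]) t
  rwa [cs.rightInvSeq_reverse, cs.rightInvSeq_reverse, count_reverse, count_reverse] at this

/-- Exchange-type lemma for simple reflections. -/
lemma mem_lis_of_descent {w : W} {j : B} (hlt : ℓ (ss j * w) < ℓ w)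
    (ω : List B) (hω : π ω = w) : ss j ∈ cs.leftInvSeq ω := by
  classical
  obtain ⟨ω', hlen, hw'⟩ := cs.exists_reduced_word (ss j * w)
  have hred : cs.IsReduced ω' := by
    show ℓ (π ω') = ω'.length
    exact hlen
  have hnot : ss j ∉ cs.leftInvSeq ω' := by
    intro hmem
    have hli := cs.isLeftInversion_of_mem_leftInvSeq hred hmem
    have h2 := hli.2
    rw [← hw'] at h2
    rw [cs.simple_mul_simple_cancel_left] at h2
    omega
  have h0 : List.count (ss j) (cs.leftInvSeq ω') = 0 := count_eq_zero.mpr hnot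
  have hcount' : List.count (ss j) (cs.leftInvSeq (j :: ω'))
      = List.count (ss j) (cs.leftInvSeq ω') + 1 := by
    rw [lis_cons, count_cons, if_pos (by simp)]
    congr 1
    have hinj := List.count_map_of_injective (cs.leftInvSeq ω') (⇑(MulAut.conj (ss j)))
      (MulAut.conj (ss j)).injective (ss j)
    have hfix : (MulAut.conj (ss j)) (ss j) = ss j := by
      rw [MulAut.conj_apply, cs.inv_simple, cs.simple_mul_simple_cancel_right]
    rw [hfix] at hinj
    exact hinj
  have hpar := count_parity_lis cs ω (j :: ω')
    (by rw [hω, wordProd_cons, ← hw', cs.simple_mul_simple_cancel_left]) (ss j)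
  rw [hcount', h0] at hpar
  by_contra hmem
  rw [count_eq_zero.mpr hmem] at hpar
  simp at hpar

/-- Dichotomy lemma: for a left descent `j` and right descent `i`,
either `s j * w * s i = w` or multiplying both sides decreases length. -/
lemma dichotomy {w : W} {i j : B} (hi : ℓ (w * ss i) < ℓ w) (hj : ℓ (ss j * w) < ℓ w) :
    ss j * w * ss i = w ∨ ℓ (ss j * w * ss i) < ℓ (w * ss i) := by
  classical
  obtain ⟨ω', hlen, heq⟩ := cs.exists_reduced_word (w * ss i)
  have hπ : π (ω' ++ [i]) = w := by
    rw [wordProd_append, wordProd_singleton, ← heq, cs.simple_mul_simple_cancel_right]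
  have hmem := mem_lis_of_descent cs hj (ω' ++ [i]) hπ
  obtain ⟨k, hk, hgk⟩ := List.getElem_of_mem hmem
  have hget : (cs.leftInvSeq (ω' ++ [i])).getD k 1 = ss j := by
    rw [List.getD_eq_getElem _ _ hk, hgk]
  have herase : ss j * w = π ((ω' ++ [i]).eraseIdx k) := by
    rw [← hπ, ← cs.getD_leftInvSeq_mul_wordProd (ω' ++ [i]) k, hget, hπ]
  have hklen : k < ω'.length + 1 := by
    have := hk
    rwa [cs.length_leftInvSeq, List.length_append, List.length_singleton] at this
  by_cases hkl : k < ω'.length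
  · right
    rw [List.eraseIdx_append_of_lt_length hkl] at herase
    have hsw : ss j * w * ss i = π (ω'.eraseIdx k) := by
      rw [herase, wordProd_append, wordProd_singleton, cs.simple_mul_simple_cancel_right]
    rw [hsw]
    calc ℓ (π (ω'.eraseIdx k)) ≤ (ω'.eraseIdx k).length := cs.length_wordProd_le _
      _ < ω'.length := by
          rw [List.length_eraseIdx_of_lt hkl]
          omega
      _ = ℓ (w * ss i) := by rw [heq]; exact (show ℓ (π ω') = ω'.length from hlen).symm
  · left
    have hkeq : k = ω'.length := by omega
    rw [List.eraseIdx_append_of_length_le (by omega)] at herase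
    rw [hkeq] at herase
    simp only [Nat.sub_self, List.eraseIdx_zero, List.tail_cons, List.append_nil] at herase
    rw [herase, ← heq, cs.simple_mul_simple_cancel_right]

variable (θ : W ≃* W)

lemma theta_wordProd (hS : PreservesSimples cs θ) (ω : List B) :
    θ (π ω) = π (ω.map (fun i => Classical.choose (hS i))) := by
  induction ω with
  | nil => simp [wordProd_nil]
  | cons i ω ih =>
    rw [wordProd_cons, map_mul, ih, map_cons, wordProd_cons]
    congr 1
    exact Classical.choose_spec (hS i)

lemma length_theta_le (hS : PreservesSimples cs θ) (w : W) : ℓ (θ w) ≤ ℓ w := by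
  obtain ⟨ω, hlen, hw⟩ := cs.exists_reduced_word w
  rw [hw, theta_wordProd cs θ hS]
  calc ℓ (π (ω.map _)) ≤ (ω.map _).length := cs.length_wordProd_le _
    _ = ω.length := List.length_map _
    _ = ℓ (π ω) := by rw [hlen]

lemma length_theta (hinv : ∀ w : W, θ (θ w) = w) (hS : PreservesSimples cs θ) (w : W) :
    ℓ (θ w) = ℓ w := by
  refine le_antisymm (length_theta_le cs θ hS w) ?_
  have := length_theta_le cs θ hS (θ w)
  rwa [hinv w] at this

lemma twWord_append_singleton (w : W) (l : List B) (i : B) :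
    twWord cs θ w (l ++ [i]) = twMul cs θ (twWord cs θ w l) i := by
  simp [twWord, List.foldl_append]

lemma twMul_mem (hinv : ∀ w : W, θ (θ w) = w) (w : W) (i : B) (hw : θ w = w⁻¹) :
    θ (twMul cs θ w i) = (twMul cs θ w i)⁻¹ := by
  by_cases h : θ (cs.simple i) * w * cs.simple i = w
  · rw [twMul, if_pos h]
    have h' : θ (cs.simple i) * w = w * cs.simple i := by
      have := congrArg (· * cs.simple i) h
      simpa [mul_assoc, cs.simple_mul_simple_self] using this
    have hθ : θ (cs.simple i) = w * cs.simple i * w⁻¹ := by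
      rw [← h']; group
    rw [map_mul, hw, hθ, mul_inv_rev, cs.inv_simple]
    group
  · rw [twMul, if_neg h]
    rw [map_mul, map_mul, hw, hinv (cs.simple i)]
    have hθinv : (θ (cs.simple i))⁻¹ = θ (cs.simple i) := by
      rw [← map_inv, cs.inv_simple]
    rw [mul_inv_rev, mul_inv_rev, cs.inv_simple, hθinv]
    group

lemma twWord_mem (hinv : ∀ w : W, θ (θ w) = w) :
    ∀ (l : List B) (w : W), θ w = w⁻¹ → θ (twWord cs θ w l) = (twWord cs θ w l)⁻¹ := by
  intro l
  induction l with
  | nil => intro w hw; simpa [twWord] using hw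
  | cons i l ih =>
    intro w hw
    have : twWord cs θ w (i :: l) = twWord cs θ (twMul cs θ w i) l := rfl
    rw [this]
    exact ih _ (twMul_mem cs θ hinv w i hw)

lemma reachable (hinv : ∀ w : W, θ (θ w) = w) (hS : PreservesSimples cs θ) :
    ∀ (n : ℕ) (w : W), ℓ w = n → θ w = w⁻¹ → ∃ l : List B, twWord cs θ 1 l = w := by
  intro n
  induction n using Nat.strong_induction_on with
  | _ n ih =>
    intro w hn hw
    by_cases hw1 : w = 1
    · exact ⟨[], by simp [twWord, hw1]⟩
    · obtain ⟨i, hi⟩ := cs.exists_rightDescent_of_ne_one hw1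
      have hi : ℓ (w * cs.simple i) < ℓ w := hi
      obtain ⟨j, hj⟩ := hS i
      have hjw : ℓ (cs.simple j * w) < ℓ w := by
        have h1 : cs.simple j * w = θ (cs.simple i * w⁻¹) := by
          rw [map_mul, hj, map_inv, hw, inv_inv]
        have h2 : ℓ (cs.simple i * w⁻¹) = ℓ (w * cs.simple i) := by
          rw [← cs.length_inv (cs.simple i * w⁻¹), mul_inv_rev, inv_inv, cs.inv_simple]
        rw [h1, length_theta cs θ hinv hS, h2]
        exact hi
      by_cases hcase : cs.simple j * w * cs.simple i = w
      · -- v = w * s i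
        have h' : cs.simple j * w = w * cs.simple i := by
          have := congrArg (· * cs.simple i) hcase
          simpa [mul_assoc, cs.simple_mul_simple_self] using this
        have hsj : cs.simple j = w * cs.simple i * w⁻¹ := by
          rw [← h']; group
        have hvI : θ (w * cs.simple i) = (w * cs.simple i)⁻¹ := by
          rw [map_mul, hw, hj, hsj, mul_inv_rev, cs.inv_simple]
          group
        obtain ⟨l, hl⟩ := ih (ℓ (w * cs.simple i)) (by omega) _ rfl hvI
        refine ⟨l ++ [i], ?_⟩
        rw [twWord_append_singleton, hl]
        have hcond : θ (cs.simple i) * (w * cs.simple i) * cs.simple i = w * cs.simple i := by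
          rw [hj, ← mul_assoc, cs.simple_mul_simple_cancel_right, h']
        rw [twMul, if_pos hcond, cs.simple_mul_simple_cancel_right]
      · have hvlt : ℓ (cs.simple j * w * cs.simple i) < ℓ w := by
          rcases dichotomy cs hi hjw with h | h
          · exact absurd h hcase
          · omega
        have hθj : θ (cs.simple j) = cs.simple i := by
          rw [← hj, hinv]
        have hvI : θ (cs.simple j * w * cs.simple i) = (cs.simple j * w * cs.simple i)⁻¹ := by
          rw [map_mul, map_mul, hw, hj, hθj, mul_inv_rev, mul_inv_rev,
            cs.inv_simple, cs.inv_simple, mul_assoc]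
        obtain ⟨l, hl⟩ := ih (ℓ (cs.simple j * w * cs.simple i)) (by omega) _ rfl hvI
        refine ⟨l ++ [i], ?_⟩
        rw [twWord_append_singleton, hl]
        have hlhs : θ (cs.simple i) * (cs.simple j * w * cs.simple i) * cs.simple i = w := by
          calc θ (cs.simple i) * (cs.simple j * w * cs.simple i) * cs.simple i
              = cs.simple j * (cs.simple j * (w * cs.simple i * cs.simple i)) := by
                rw [hj]; group
            _ = w * cs.simple i * cs.simple i := by rw [cs.simple_mul_simple_cancel_left]
            _ = w := by rw [cs.simple_mul_simple_cancel_right]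
        have hcond : ¬(θ (cs.simple i) * (cs.simple j * w * cs.simple i) * cs.simple i
            = cs.simple j * w * cs.simple i) := by
          rw [hlhs]
          intro hcc
          exact hcase hcc.symm
        rw [twMul, if_neg hcond, hlhs]

end TwistedAux

open TwistedAux in
/-- The orbit of the identity under the twisted monoid action is exactly the
set of twisted involutions `I(θ)`. -/
theorem stmt_3 {B W : Type*} [Group W] {M : CoxeterMatrix B}
    (cs : CoxeterSystem M W) (θ : W ≃* W)
    (hinv : ∀ w : W, θ (θ w) = w) (hS : PreservesSimples cs θ) :
    {w : W | ∃ l : List B, twWord cs θ 1 l = w} = {w : W | θ w = w⁻¹} := by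
  ext w
  simp only [Set.mem_setOf_eq]
  constructor
  · rintro ⟨l, rfl⟩
    exact twWord_mem cs θ hinv l 1 (by simp)
  · intro hw
    exact reachable cs θ hinv hS (cs.length w) w rfl hw
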